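/- Let E and F be A-modules with K-linear T-actions compatible with multiplication and let φ : E → F be an A-linear T-equivariant map. Let (ẽ_i)_{i∈I} be an A-basis of E with each ẽ_i a weight vector with character χ_i, and let (f̃_j)_{j∈J} be an A-basis of F with each f̃_j a weight vector with character η_j. Suppose φ is minimal in the sense that for every finitely supported family (c_i) of elements of K, Σ_i c_i • φ(ẽ_i) ∈ 𝔪 • (range φ) implies c_i = 0 for all i. Then for every i: (1) φ(ẽ_i) ≠ 0; and (2) whenever a monomial x^α occurs in the support of the f̃_ĵ-coordinate of φ(ẽ_i), one has χ_i = χ^α · η_ĵ. -/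

import Mathlib

/-- Let `φ : E → F` be an `A`-linear `T`-equivariant map, `(ẽ i)` an `A`-basis of `E` of
weight vectors with characters `χE i`, and `(f̃ j)` an `A`-basis of `F` of weight vectors with
characters `η j`.  If `φ` is minimal (the residue classes of the `φ (ẽ i)` modulo
`𝔪 • range φ` are `K`-linearly independent), then each `φ (ẽ i) ≠ 0`, and whenever a monomial
`x^α` occurs in the support of the `f̃ jhat`-coordinate of `φ (ẽ i)` one has
`χE i = χ^α · η jhat`. -/
theorem summary_weights_basis_of_weight_vectors
    {K : Type*} [Field K] {T : Type*} [Group T] {n : ℕ}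
    (ρA : Representation K T (MvPolynomial (Fin n) K))
    (hmulA : ∀ (τ : T) (p q : MvPolynomial (Fin n) K), ρA τ (p * q) = ρA τ p * ρA τ q)
    (χv : Fin n → (T →* Kˣ))
    (hX : ∀ (i : Fin n) (τ : T),
      ρA τ (MvPolynomial.X i) = ((χv i τ : Kˣ) : K) • (MvPolynomial.X i : MvPolynomial (Fin n) K))
    {E F : Type*}
    [AddCommGroup E] [Module K E] [Module (MvPolynomial (Fin n) K) E]
    [IsScalarTower K (MvPolynomial (Fin n) K) E]
    [AddCommGroup F] [Module K F] [Module (MvPolynomial (Fin n) K) F]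
    [IsScalarTower K (MvPolynomial (Fin n) K) F]
    (ρE : Representation K T E) (ρF : Representation K T F)
    (hE : ∀ (τ : T) (a : MvPolynomial (Fin n) K) (m : E), ρE τ (a • m) = ρA τ a • ρE τ m)
    (hF : ∀ (τ : T) (a : MvPolynomial (Fin n) K) (m : F), ρF τ (a • m) = ρA τ a • ρF τ m)
    (φ : E →ₗ[MvPolynomial (Fin n) K] F)
    (hφ : ∀ (τ : T) (e : E), φ (ρE τ e) = ρF τ (φ e))
    {I J : Type*}
    (bE : Module.Basis I (MvPolynomial (Fin n) K) E)
    (χE : I → (T →* Kˣ))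
    (hbE : ∀ (i : I) (τ : T), ρE τ (bE i) = ((χE i τ : Kˣ) : K) • bE i)
    (bF : Module.Basis J (MvPolynomial (Fin n) K) F)
    (η : J → (T →* Kˣ))
    (hbF : ∀ (j : J) (τ : T), ρF τ (bF j) = ((η j τ : Kˣ) : K) • bF j)
    (hmin : ∀ c : I →₀ K,
      (c.sum fun i a => a • φ (bE i)) ∈
        (Ideal.span (Set.range (MvPolynomial.X : Fin n → MvPolynomial (Fin n) K))) •
          LinearMap.range φ
      → c = 0) :
    ∀ i : I,
      φ (bE i) ≠ 0 ∧
      ∀ (jhat : J) (α : Fin n →₀ ℕ), α ∈ (bF.repr (φ (bE i)) jhat).support →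
        χE i = (∏ k, χv k ^ α k) * η jhat := by

  classical
  have hone : ∀ τ : T, ρA τ (1 : MvPolynomial (Fin n) K) = 1 := by
    intro τ
    have hne : ρA τ (1 : MvPolynomial (Fin n) K) ≠ 0 := by
      intro h
      have h2 : (ρA τ⁻¹) ((ρA τ) (1 : MvPolynomial (Fin n) K)) = 1 := by
        rw [← Module.End.mul_apply, ← map_mul, inv_mul_cancel,
          show ρA (1:T) = 1 from map_one ρA, Module.End.one_apply]
      rw [h, map_zero] at h2
      exact one_ne_zero h2.symm
    have h1 : ρA τ 1 * ρA τ 1 = ρA τ 1 * 1 := by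
      rw [mul_one, ← hmulA, one_mul]
    exact mul_left_cancel₀ hne h1
  have hmono : ∀ (τ : T) (α : Fin n →₀ ℕ),
      ρA τ (MvPolynomial.monomial α (1:K)) =
        (∏ k, ((χv k τ : Kˣ) : K) ^ α k) • MvPolynomial.monomial α (1:K) := by
    intro τ α
    let g : MvPolynomial (Fin n) K →* MvPolynomial (Fin n) K :=
      { toFun := ρA τ, map_one' := hone τ, map_mul' := hmulA τ }
    have hmon : (MvPolynomial.monomial α (1:K) : MvPolynomial (Fin n) K)
        = ∏ k, MvPolynomial.X k ^ α k := by
      rw [MvPolynomial.monomial_eq, MvPolynomial.C_1, one_mul, Finsupp.prod_fintype]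
      intro k; exact pow_zero _
    rw [hmon]
    calc ρA τ (∏ k, (MvPolynomial.X k : MvPolynomial (Fin n) K) ^ α k)
        = g (∏ k, MvPolynomial.X k ^ α k) := rfl
      _ = ∏ k, (g (MvPolynomial.X k)) ^ α k := by
          rw [map_prod]; exact Finset.prod_congr rfl fun k _ => map_pow g _ _
      _ = ∏ k, ((((χv k τ : Kˣ):K)) • (MvPolynomial.X k : MvPolynomial (Fin n) K)) ^ α k := by
          refine Finset.prod_congr rfl fun k _ => ?_
          rw [show g (MvPolynomial.X k) = ρA τ (MvPolynomial.X k) from rfl, hX]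
      _ = ∏ k, ((((χv k τ : Kˣ):K)) ^ α k) • (MvPolynomial.X k : MvPolynomial (Fin n) K) ^ α k := by
          refine Finset.prod_congr rfl fun k _ => smul_pow _ _ _
      _ = ∏ k, MvPolynomial.C (((χv k τ : Kˣ):K) ^ α k) * (MvPolynomial.X k : MvPolynomial (Fin n) K) ^ α k := by
          refine Finset.prod_congr rfl fun k _ => ?_
          rw [MvPolynomial.smul_eq_C_mul]
      _ = MvPolynomial.C (∏ k, ((χv k τ : Kˣ):K) ^ α k) * ∏ k, (MvPolynomial.X k : MvPolynomial (Fin n) K) ^ α k := by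
          rw [Finset.prod_mul_distrib, map_prod]
      _ = (∏ k, ((χv k τ : Kˣ):K) ^ α k) • ∏ k, (MvPolynomial.X k : MvPolynomial (Fin n) K) ^ α k := by
          rw [MvPolynomial.smul_eq_C_mul]
  have hcoeff : ∀ (τ : T) (p : MvPolynomial (Fin n) K) (β : Fin n →₀ ℕ),
      MvPolynomial.coeff β (ρA τ p)
        = (∏ k, ((χv k τ : Kˣ):K) ^ β k) * MvPolynomial.coeff β p := by
    intro τ p β
    conv_lhs => rw [← MvPolynomial.support_sum_monomial_coeff p]
    rw [map_sum]
    have hterm : ∀ α ∈ p.support, ρA τ (MvPolynomial.monomial α (MvPolynomial.coeff α p)) =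
        (MvPolynomial.coeff α p * ∏ k, ((χv k τ : Kˣ):K) ^ α k) • MvPolynomial.monomial α (1:K) := by
      intro α _
      have h1 : (MvPolynomial.monomial α (MvPolynomial.coeff α p) : MvPolynomial (Fin n) K)
          = MvPolynomial.coeff α p • MvPolynomial.monomial α 1 := by
        rw [MvPolynomial.smul_monomial, smul_eq_mul, mul_one]
      rw [h1, map_smul, hmono, smul_smul]
    rw [Finset.sum_congr rfl hterm, MvPolynomial.coeff_sum]
    simp only [MvPolynomial.coeff_smul, MvPolynomial.coeff_monomial, smul_eq_mul,
      mul_ite, mul_one, mul_zero]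
    rw [Finset.sum_ite_eq' p.support β]
    split_ifs with h
    · ring
    · rw [MvPolynomial.notMem_support_iff.mp h, mul_zero]
  intro i
  constructor
  · intro h0
    have hc := hmin (Finsupp.single i 1) ?_
    · have := DFunLike.congr_fun hc i
      simp at this
    · rw [Finsupp.sum_single_index (by rw [zero_smul]), one_smul, h0]
      exact Submodule.zero_mem _
  · intro jhat α hα
    set a : MvPolynomial (Fin n) K := bF.repr (φ (bE i)) jhat with ha
    have key : ∀ τ : T,
        ((η jhat τ : Kˣ) : K) • ρA τ a = ((χE i τ : Kˣ) : K) • a := by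
      intro τ
      have h1 : ρF τ (φ (bE i)) = ((χE i τ : Kˣ):K) • φ (bE i) := by
        rw [← hφ, hbE]; exact φ.map_smul_of_tower _ _
      have h2 : ρF τ (φ (bE i)) =
          (bF.repr (φ (bE i))).sum fun j c => ((((η j τ : Kˣ):K)) • ρA τ c) • bF j := by
        conv_lhs => rw [← bF.linearCombination_repr (φ (bE i)), Finsupp.linearCombination_apply]
        rw [map_finsuppSum]
        refine Finsupp.sum_congr fun j _ => ?_
        rw [hF, hbF, ← algebraMap_smul (MvPolynomial (Fin n) K) (((η j τ : Kˣ)):K) (bF j),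
          smul_smul, Algebra.smul_def, mul_comm]
      have h3 : bF.repr (ρF τ (φ (bE i))) jhat = (((η jhat τ : Kˣ)):K) • ρA τ a := by
        rw [h2, map_finsuppSum, Finsupp.sum_apply]
        simp only [map_smul, Module.Basis.repr_self, Finsupp.smul_single, smul_eq_mul, mul_one,
          Finsupp.single_apply]
        rw [Finsupp.sum_ite_eq' (bF.repr (φ (bE i))) jhat]
        split_ifs with h
        · rfl
        · rw [Finsupp.notMem_support_iff.mp h] at ha
          rw [ha, map_zero, smul_zero]
      have h5 : bF.repr (ρF τ (φ (bE i))) jhat = ((χE i τ : Kˣ):K) • a := by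
        rw [h1, ← algebraMap_smul (MvPolynomial (Fin n) K) (((χE i τ : Kˣ)):K) (φ (bE i)),
          map_smul, Finsupp.smul_apply, algebraMap_smul]
      rw [← h3, h5]
    have haK : MvPolynomial.coeff α a ≠ 0 := MvPolynomial.mem_support_iff.mp hα
    have keyc : ∀ τ : T,
        ((χE i τ : Kˣ) : K)
          = (∏ k, ((χv k τ : Kˣ):K) ^ α k) * ((η jhat τ : Kˣ) : K) := by
      intro τ
      have h6 := congrArg (MvPolynomial.coeff α) (key τ)
      rw [MvPolynomial.coeff_smul, MvPolynomial.coeff_smul, hcoeff, smul_eq_mul, smul_eq_mul,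
        ← mul_assoc] at h6
      have h7 : (((η jhat τ : Kˣ):K) * ∏ k, ((χv k τ : Kˣ):K) ^ α k) * MvPolynomial.coeff α a
          = ((χE i τ : Kˣ):K) * MvPolynomial.coeff α a := h6
      have := mul_right_cancel₀ haK h7
      rw [← this, mul_comm]
    ext τ
    have := keyc τ
    push_cast at this ⊢
    simpa using this
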